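/- arXiv:2504.04674 — 4 statements merged into one kernel-verified Lean document; each statement's English description precedes it below -/
import Mathlib

section
/- Let a = 1/2, M = 1, r = √3/2, and let θ be any real number with 0 < θ < π. Then ρ = [4r⁶ csc θ (a² + r²) + 2a²r⁵ sin θ (M − r)] / (Π³ Φ [a⁴ + 2r⁴ + a²r(2M + 3r) + a²Δ cos 2θ]) > 0, where Δ = r² − 2Mr + a², Π = √(a² + 2r² + a² cos 2θ), Φ = √((a² + r²)² csc²θ − a²Δ). That is, on the 2-surface r = √3/2 the outgoing convergence of the adapted null tetrad is strictly positive everywhere. -/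
/-- For the Kerr parameters `a = 1/2`, `M = 1` and the 2-surface `r = √3/2`,
the outgoing convergence
`ρ = [4r⁶ csc θ (a² + r²) + 2a²r⁵ sin θ (M − r)] / (Π³ Φ [a⁴ + 2r⁴ + a²r(2M + 3r) + a²Δ cos 2θ])`
of the adapted null tetrad is strictly positive for every `0 < θ < π`. -/
theorem kerr_rho_pos_on_trapped_surface (a M r θ : ℝ)
    (ha : a = 1 / 2) (hM : M = 1) (hr : r = Real.sqrt 3 / 2)
    (hθ1 : 0 < θ) (hθ2 : θ < Real.pi) :
    0 < (4 * r ^ 6 * (1 / Real.sin θ) * (a ^ 2 + r ^ 2) +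
          2 * a ^ 2 * r ^ 5 * Real.sin θ * (M - r)) /
        ((Real.sqrt (a ^ 2 + 2 * r ^ 2 + a ^ 2 * Real.cos (2 * θ))) ^ 3 *
          Real.sqrt ((a ^ 2 + r ^ 2) ^ 2 / Real.sin θ ^ 2 -
            a ^ 2 * (r ^ 2 - 2 * M * r + a ^ 2)) *
          (a ^ 4 + 2 * r ^ 4 + a ^ 2 * r * (2 * M + 3 * r) +
            a ^ 2 * (r ^ 2 - 2 * M * r + a ^ 2) * Real.cos (2 * θ))) := by
  subst ha hM hr
  have hs : 0 < Real.sin θ := Real.sin_pos_of_pos_of_lt_pi hθ1 hθ2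
  have hs1 : Real.sin θ ≤ 1 := Real.sin_le_one θ
  have hc1 : Real.cos (2 * θ) ≤ 1 := Real.cos_le_one _
  have hc2 : -1 ≤ Real.cos (2 * θ) := Real.neg_one_le_cos _
  have h3 : Real.sqrt 3 ^ 2 = 3 := Real.sq_sqrt (by norm_num)
  have h3n : 0 ≤ Real.sqrt 3 := Real.sqrt_nonneg 3
  have h3a : 1 < Real.sqrt 3 := by nlinarith
  have h3b : Real.sqrt 3 < 2 := by nlinarith
  set s := Real.sin θ with hsdef
  set c := Real.cos (2 * θ) with hcdef
  set q := Real.sqrt 3 with hqdef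
  have hsinv : 0 < 1 / s := by positivity
  apply div_pos
  · have h1 : 0 < 4 * (q / 2) ^ 6 * (1 / s) * ((1 / 2 : ℝ) ^ 2 + (q / 2) ^ 2) := by
      have hq : (0:ℝ) < q := by linarith
      nlinarith [mul_pos hsinv hq, sq_nonneg q, mul_pos (mul_pos hq hq) (mul_pos (mul_pos hq hq) (mul_pos (mul_pos hq hq) hsinv))]
    have h2 : 0 < 2 * (1 / 2 : ℝ) ^ 2 * (q / 2) ^ 5 * s * (1 - q / 2) := by
      have hq5 : 0 < (q / 2) ^ 5 := by positivity
      nlinarith [mul_pos hq5 hs]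
    linarith
  · refine mul_pos (mul_pos ?_ ?_) ?_
    · have hPi : 0 < Real.sqrt ((1 / 2 : ℝ) ^ 2 + 2 * (q / 2) ^ 2 + (1 / 2 : ℝ) ^ 2 * c) := by
        apply Real.sqrt_pos.mpr
        nlinarith
      positivity
    · apply Real.sqrt_pos.mpr
      have hX : 0 < ((1 / 2 : ℝ) ^ 2 + (q / 2) ^ 2) ^ 2 / s ^ 2 := by positivity
      nlinarith
    · nlinarith [mul_le_mul_of_nonpos_left hc1 (show (1 : ℝ) - q ≤ 0 by nlinarith)]
end

section
/- Let a = 1/2, M = 1, r = √3/2, and let θ be any real number with 0 < θ < π. Then ρ′ = −Δ Π⁵ [4r³ + a²(M + 3r) + a² cos(2θ)(r − M)] · [a⁴ + 2r⁴ + a²r(2M + 3r) + a²Δ cos 2θ] / (64 r⁵ Σ² Φ³ sin³θ) > 0, where Σ = r² + a² cos²θ, Δ = r² − 2Mr + a², Π = √(a² + 2r² + a² cos 2θ), Φ = √((a² + r²)² csc²θ − a²Δ). That is, on the 2-surface r = √3/2 the ingoing convergence of the adapted null tetrad is strictly positive everywhere. -/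
/-- For the Kerr parameters `a = 1/2`, `M = 1` and the 2-surface `r = √3/2`,
the ingoing convergence
`ρ′ = −Δ Π⁵ [4r³ + a²(M + 3r) + a² cos(2θ)(r − M)] · [a⁴ + 2r⁴ + a²r(2M + 3r) + a²Δ cos 2θ] / (64 r⁵ Σ² Φ³ sin³θ)`
of the adapted null tetrad is strictly positive for every `0 < θ < π`. -/
theorem kerr_rhoprime_pos_on_trapped_surface (a M r θ : ℝ)
    (ha : a = 1 / 2) (hM : M = 1) (hr : r = Real.sqrt 3 / 2)
    (hθ1 : 0 < θ) (hθ2 : θ < Real.pi) :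
    0 < -((r ^ 2 - 2 * M * r + a ^ 2) *
          (Real.sqrt (a ^ 2 + 2 * r ^ 2 + a ^ 2 * Real.cos (2 * θ))) ^ 5 *
          (4 * r ^ 3 + a ^ 2 * (M + 3 * r) + a ^ 2 * Real.cos (2 * θ) * (r - M)) *
          (a ^ 4 + 2 * r ^ 4 + a ^ 2 * r * (2 * M + 3 * r) +
            a ^ 2 * (r ^ 2 - 2 * M * r + a ^ 2) * Real.cos (2 * θ))) /
        (64 * r ^ 5 * (r ^ 2 + a ^ 2 * Real.cos θ ^ 2) ^ 2 *
          (Real.sqrt ((a ^ 2 + r ^ 2) ^ 2 / Real.sin θ ^ 2 -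
            a ^ 2 * (r ^ 2 - 2 * M * r + a ^ 2))) ^ 3 *
          Real.sin θ ^ 3) := by
  subst ha hM hr
  have hs2 : Real.sqrt 3 ^ 2 = 3 := Real.sq_sqrt (by norm_num)
  have hs0 : 0 ≤ Real.sqrt 3 := Real.sqrt_nonneg 3
  have hs1 : 1 < Real.sqrt 3 := by nlinarith
  have hslt : Real.sqrt 3 < 2 := by nlinarith
  set s := Real.sqrt 3 with hs
  have hc1 : -1 ≤ Real.cos (2 * θ) := Real.neg_one_le_cos _
  have hc2 : Real.cos (2 * θ) ≤ 1 := Real.cos_le_one _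
  set c := Real.cos (2 * θ) with hcdef
  have hsin : 0 < Real.sin θ := Real.sin_pos_of_pos_of_lt_pi hθ1 hθ2
  set t := Real.sin θ with htdef
  -- Π > 0
  have hPIarg : 0 < (1 / 2 : ℝ) ^ 2 + 2 * (s / 2) ^ 2 + (1 / 2 : ℝ) ^ 2 * c := by
    nlinarith
  have hP : 0 < Real.sqrt ((1 / 2 : ℝ) ^ 2 + 2 * (s / 2) ^ 2 + (1 / 2 : ℝ) ^ 2 * c) :=
    Real.sqrt_pos.mpr hPIarg
  have hP5 : 0 < Real.sqrt ((1 / 2 : ℝ) ^ 2 + 2 * (s / 2) ^ 2 + (1 / 2 : ℝ) ^ 2 * c) ^ 5 :=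
    pow_pos hP 5
  -- -Δ > 0
  have hΔ : 0 < -((s / 2) ^ 2 - 2 * 1 * (s / 2) + (1 / 2 : ℝ) ^ 2) := by nlinarith
  -- F3 > 0
  have hF3 : 0 < 4 * (s / 2) ^ 3 + (1 / 2 : ℝ) ^ 2 * (1 + 3 * (s / 2)) +
      (1 / 2 : ℝ) ^ 2 * c * (s / 2 - 1) := by nlinarith
  -- F4 > 0
  have hF4 : 0 < (1 / 2 : ℝ) ^ 4 + 2 * (s / 2) ^ 4 + (1 / 2 : ℝ) ^ 2 * (s / 2) * (2 * 1 + 3 * (s / 2)) +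
      (1 / 2 : ℝ) ^ 2 * ((s / 2) ^ 2 - 2 * 1 * (s / 2) + (1 / 2 : ℝ) ^ 2) * c := by nlinarith
  apply div_pos
  · have h : -(((s / 2) ^ 2 - 2 * 1 * (s / 2) + (1 / 2 : ℝ) ^ 2) *
        Real.sqrt ((1 / 2 : ℝ) ^ 2 + 2 * (s / 2) ^ 2 + (1 / 2 : ℝ) ^ 2 * c) ^ 5 *
        (4 * (s / 2) ^ 3 + (1 / 2 : ℝ) ^ 2 * (1 + 3 * (s / 2)) +
          (1 / 2 : ℝ) ^ 2 * c * (s / 2 - 1)) *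
        ((1 / 2 : ℝ) ^ 4 + 2 * (s / 2) ^ 4 + (1 / 2 : ℝ) ^ 2 * (s / 2) * (2 * 1 + 3 * (s / 2)) +
          (1 / 2 : ℝ) ^ 2 * ((s / 2) ^ 2 - 2 * 1 * (s / 2) + (1 / 2 : ℝ) ^ 2) * c)) =
        -((s / 2) ^ 2 - 2 * 1 * (s / 2) + (1 / 2 : ℝ) ^ 2) *
        Real.sqrt ((1 / 2 : ℝ) ^ 2 + 2 * (s / 2) ^ 2 + (1 / 2 : ℝ) ^ 2 * c) ^ 5 *
        (4 * (s / 2) ^ 3 + (1 / 2 : ℝ) ^ 2 * (1 + 3 * (s / 2)) +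
          (1 / 2 : ℝ) ^ 2 * c * (s / 2 - 1)) *
        ((1 / 2 : ℝ) ^ 4 + 2 * (s / 2) ^ 4 + (1 / 2 : ℝ) ^ 2 * (s / 2) * (2 * 1 + 3 * (s / 2)) +
          (1 / 2 : ℝ) ^ 2 * ((s / 2) ^ 2 - 2 * 1 * (s / 2) + (1 / 2 : ℝ) ^ 2) * c) := by ring
    rw [h]
    exact mul_pos (mul_pos (mul_pos hΔ hP5) hF3) hF4
  · have hr5 : 0 < (s / 2 : ℝ) ^ 5 := by positivity
    have hSig : 0 < ((s / 2) ^ 2 + (1 / 2 : ℝ) ^ 2 * Real.cos θ ^ 2) ^ 2 := by positivity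
    have hPhiArg : 0 < ((1 / 2 : ℝ) ^ 2 + (s / 2) ^ 2) ^ 2 / t ^ 2 -
        (1 / 2 : ℝ) ^ 2 * ((s / 2) ^ 2 - 2 * 1 * (s / 2) + (1 / 2 : ℝ) ^ 2) := by
      have h1 : 0 < ((1 / 2 : ℝ) ^ 2 + (s / 2) ^ 2) ^ 2 / t ^ 2 := by positivity
      nlinarith
    have hPhi : 0 < Real.sqrt (((1 / 2 : ℝ) ^ 2 + (s / 2) ^ 2) ^ 2 / t ^ 2 -
        (1 / 2 : ℝ) ^ 2 * ((s / 2) ^ 2 - 2 * 1 * (s / 2) + (1 / 2 : ℝ) ^ 2)) :=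
      Real.sqrt_pos.mpr hPhiArg
    have ht3 : 0 < t ^ 3 := pow_pos hsin 3
    positivity
end

section
/- Let M, a, r, θ be real numbers with r > 0, 0 < θ < π, Σ = r² + a² cos²θ > 0, Δ = r² − 2Mr + a² ≠ 0, and (a² + r²)² − a²Δ sin²θ > 0. Define Π = √(a² + 2r² + a² cos 2θ), Φ = √((a² + r²)² csc²θ − a²Δ), and the vector l = (1/(2r⁵)) · (Π[a²Δ sin²θ − (a² + r²)²], ΔΠΦ sin θ, 0, −2raMΠ) with components in the order (t, r, θ, φ). Then g_tt (lᵗ)² + g_rr (lʳ)² + 2 g_tφ lᵗ lᵠ + g_φφ (lᵠ)² = 0; that is, the tetrad vector l is null with respect to the Boyer–Lindquist Kerr metric. -/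
/-- The tetrad vector
`l = (1/(2r⁵)) (Π[a²Δ sin²θ − (a² + r²)²], ΔΠΦ sin θ, 0, −2raMΠ)` is null with
respect to the Boyer–Lindquist Kerr metric:
`g_tt (lᵗ)² + g_rr (lʳ)² + 2 g_tφ lᵗ lᵠ + g_φφ (lᵠ)² = 0`. -/
theorem kerr_tetrad_l_null (M a r θ : ℝ)
    (hr : 0 < r) (hθ1 : 0 < θ) (hθ2 : θ < Real.pi)
    (S Δ P Φ lt lr lφ : ℝ)
    (hS : S = r ^ 2 + a ^ 2 * Real.cos θ ^ 2) (hSpos : 0 < S)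
    (hΔ : Δ = r ^ 2 - 2 * M * r + a ^ 2) (hΔne : Δ ≠ 0)
    (hA : 0 < (a ^ 2 + r ^ 2) ^ 2 - a ^ 2 * Δ * Real.sin θ ^ 2)
    (hP : P = Real.sqrt (a ^ 2 + 2 * r ^ 2 + a ^ 2 * Real.cos (2 * θ)))
    (hΦ : Φ = Real.sqrt ((a ^ 2 + r ^ 2) ^ 2 / Real.sin θ ^ 2 - a ^ 2 * Δ))
    (hlt : lt = 1 / (2 * r ^ 5) * (P * (a ^ 2 * Δ * Real.sin θ ^ 2 - (a ^ 2 + r ^ 2) ^ 2)))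
    (hlr : lr = 1 / (2 * r ^ 5) * (Δ * P * Φ * Real.sin θ))
    (hlφ : lφ = 1 / (2 * r ^ 5) * (-2 * r * a * M * P)) :
    -(1 - 2 * M * r / S) * lt ^ 2 + (S / Δ) * lr ^ 2 +
      2 * (-(2 * M * r * a * Real.sin θ ^ 2 / S)) * lt * lφ +
      ((r ^ 2 + a ^ 2 + 2 * M * r * a ^ 2 * Real.sin θ ^ 2 / S) * Real.sin θ ^ 2) * lφ ^ 2
      = 0 := by
  have hsin : 0 < Real.sin θ := Real.sin_pos_of_pos_of_lt_pi hθ1 hθ2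
  have hsne : Real.sin θ ≠ 0 := ne_of_gt hsin
  have hSne : S ≠ 0 := ne_of_gt hSpos
  have hrne : r ≠ 0 := ne_of_gt hr
  have keyP : a ^ 2 + 2 * r ^ 2 + a ^ 2 * Real.cos (2 * θ) = 2 * S := by
    rw [Real.cos_two_mul, hS]; ring
  have hP2 : P ^ 2 = 2 * S := by
    rw [hP, keyP, Real.sq_sqrt (by linarith)]
  have hΦ2 : Φ ^ 2 * Real.sin θ ^ 2
      = (a ^ 2 + r ^ 2) ^ 2 - a ^ 2 * Δ * Real.sin θ ^ 2 := by
    have hnn : (0:ℝ) ≤ (a ^ 2 + r ^ 2) ^ 2 / Real.sin θ ^ 2 - a ^ 2 * Δ := by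
      have h1 : (a ^ 2 + r ^ 2) ^ 2 / Real.sin θ ^ 2 - a ^ 2 * Δ
          = ((a ^ 2 + r ^ 2) ^ 2 - a ^ 2 * Δ * Real.sin θ ^ 2) / Real.sin θ ^ 2 := by
        field_simp
      rw [h1]
      positivity
    rw [hΦ, Real.sq_sqrt hnn]
    field_simp
  have key : -(1 - 2 * M * r / S) * lt ^ 2 + (S / Δ) * lr ^ 2 +
      2 * (-(2 * M * r * a * Real.sin θ ^ 2 / S)) * lt * lφ +
      ((r ^ 2 + a ^ 2 + 2 * M * r * a ^ 2 * Real.sin θ ^ 2 / S) * Real.sin θ ^ 2) * lφ ^ 2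
      = (1 / (2 * r ^ 5)) ^ 2 * P ^ 2 *
        (-(1 - 2 * M * r / S) * (a ^ 2 * Δ * Real.sin θ ^ 2 - (a ^ 2 + r ^ 2) ^ 2) ^ 2
          + (S / Δ) * Δ ^ 2 * (Φ ^ 2 * Real.sin θ ^ 2)
          + 2 * (-(2 * M * r * a * Real.sin θ ^ 2 / S)) *
              (a ^ 2 * Δ * Real.sin θ ^ 2 - (a ^ 2 + r ^ 2) ^ 2) * (-2 * r * a * M)
          + ((r ^ 2 + a ^ 2 + 2 * M * r * a ^ 2 * Real.sin θ ^ 2 / S) * Real.sin θ ^ 2) *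
              (-2 * r * a * M) ^ 2) := by
    rw [hlt, hlr, hlφ]; ring
  rw [key, hP2, hΦ2]
  subst hS hΔ
  have hpyth : Real.sin θ ^ 2 = 1 - Real.cos θ ^ 2 := by
    have := Real.sin_sq_add_cos_sq θ; linarith
  rw [hpyth] at *
  field_simp
  ring
end

section
/- Let M, a, r, θ be real numbers with r > 0, 0 < θ < π, and Σ = r² + a² cos²θ > 0. Define Π = √(a² + 2r² + a² cos 2θ) and the vector l = (1/(2r⁵)) · (Π[a²Δ sin²θ − (a² + r²)²], ΔΠΦ sin θ, 0, −2raMΠ) with Δ = r² − 2Mr + a², Φ = √((a² + r²)² csc²θ − a²Δ), components in the order (t, r, θ, φ). Then g_tφ lᵗ + g_φφ lᵠ = 0 and g_θθ lᶿ = 0; that is, l is orthogonal to the coordinate vector fields ∂_φ and ∂_θ, and hence orthogonal to the 2-surfaces of constant t and r. -/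
/-- The tetrad vector
`l = (1/(2r⁵)) (Π[a²Δ sin²θ − (a² + r²)²], ΔΠΦ sin θ, 0, −2raMΠ)` is orthogonal
to the coordinate vector fields `∂_φ` and `∂_θ` of the Boyer–Lindquist Kerr
metric: `g_tφ lᵗ + g_φφ lᵠ = 0` and `g_θθ lᶿ = 0`, hence orthogonal to the
2-surfaces of constant `t` and `r`. -/
theorem kerr_tetrad_l_orthogonal_to_surface (M a r θ : ℝ)
    (hr : 0 < r) (hθ1 : 0 < θ) (hθ2 : θ < Real.pi)
    (S Δ P Φ lt lθ lφ : ℝ)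
    (hS : S = r ^ 2 + a ^ 2 * Real.cos θ ^ 2) (hSpos : 0 < S)
    (hΔ : Δ = r ^ 2 - 2 * M * r + a ^ 2)
    (hP : P = Real.sqrt (a ^ 2 + 2 * r ^ 2 + a ^ 2 * Real.cos (2 * θ)))
    (hΦ : Φ = Real.sqrt ((a ^ 2 + r ^ 2) ^ 2 / Real.sin θ ^ 2 - a ^ 2 * Δ))
    (hlt : lt = 1 / (2 * r ^ 5) * (P * (a ^ 2 * Δ * Real.sin θ ^ 2 - (a ^ 2 + r ^ 2) ^ 2)))
    (hlθ : lθ = 0)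
    (hlφ : lφ = 1 / (2 * r ^ 5) * (-2 * r * a * M * P)) :
    (-(2 * M * r * a * Real.sin θ ^ 2 / S)) * lt +
      ((r ^ 2 + a ^ 2 + 2 * M * r * a ^ 2 * Real.sin θ ^ 2 / S) * Real.sin θ ^ 2) * lφ = 0 ∧
    S * lθ = 0 := by
  subst hlt hlθ hlφ hΔ hS
  refine ⟨?_, by ring⟩
  have hc : Real.cos θ ^ 2 = 1 - Real.sin θ ^ 2 := by
    linear_combination Real.sin_sq_add_cos_sq θ
  rw [hc]
  have hr0 : r ≠ 0 := hr.ne'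
  have hS0 : r ^ 2 + a ^ 2 * (1 - Real.sin θ ^ 2) ≠ 0 := by rw [← hc]; nlinarith [hSpos, hc]
  field_simp
  ring
end
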